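/- Let E be a real inner product space, let Φ : E → ℝ be differentiable and convex, and define the Bregman divergence D_Φ(a, b) = Φ(a) − Φ(b) − ⟨∇Φ(b), a − b⟩. Let T be a positive integer, let y*_1,…,y*_{T+1} ∈ E and y^π_0, y^π_1,…,y^π_T ∈ E, and let D, L ≥ 0 be constants such that D_Φ(y*_1, y^π_0) ≤ D², and ‖∇Φ(y*_{t+1})‖ ≤ L and ‖∇Φ(y^π_t)‖ ≤ L for every t ∈ {1,…,T}. Then Σ_{t=1}^{T} ( D_Φ(y*_t, y^π_{t−1}) − D_Φ(y*_t, y^π_t) ) ≤ D² + 2L·Σ_{t=1}^{T} ‖y*_{t+1} − y*_t‖. -/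

import Mathlib

open scoped RealInnerProductSpace

/-- Gradient inequality for a convex differentiable function. -/
lemma grad_ineq_aux {E : Type*} [NormedAddCommGroup E] [InnerProductSpace ℝ E]
    (Φ : E → ℝ) (gΦ : E → E)
    (hΦdiff : ∀ x, HasFDerivAt Φ ((InnerProductSpace.toDualMap ℝ E (gΦ x) :
        StrongDual ℝ E) : E →L[ℝ] ℝ) x)
    (hΦconv : ConvexOn ℝ Set.univ Φ) (x y : E) :
    ⟪gΦ x, y - x⟫ ≤ Φ y - Φ x := by
  have h1 : HasDerivAt (fun t : ℝ => x + t • (y - x)) (y - x) 0 := by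
    simpa using ((hasDerivAt_id (0:ℝ)).smul_const (y - x)).const_add x
  have hline : HasDerivAt (fun t : ℝ => Φ (x + t • (y - x))) ⟪gΦ x, y - x⟫ 0 := by
    have := (hΦdiff (x + (0:ℝ) • (y - x))).comp_hasDerivAt 0 h1
    simp at this; exact this
  have hmono : (nhdsWithin (0:ℝ) (Set.Ioi 0)) ≤ (nhdsWithin (0:ℝ) {(0:ℝ)}ᶜ) := by
    apply nhdsWithin_mono
    intro t ht
    exact ne_of_gt ht
  have hslope : Filter.Tendsto (slope (fun t : ℝ => Φ (x + t • (y - x))) 0)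
      (nhdsWithin (0:ℝ) (Set.Ioi 0)) (nhds ⟪gΦ x, y - x⟫) :=
    (hasDerivAt_iff_tendsto_slope.1 hline).mono_left hmono
  refine le_of_tendsto hslope ?_
  filter_upwards [Ioc_mem_nhdsGT one_pos] with t ht
  obtain ⟨ht0, ht1⟩ := ht
  have hc := hΦconv.2 (Set.mem_univ y) (Set.mem_univ x) ht0.le (by linarith : (0:ℝ) ≤ 1 - t)
    (by ring)
  have heq : x + t • (y - x) = t • y + (1 - t) • x := by
    rw [smul_sub, sub_smul, one_smul]; abel
  have hs : slope (fun t : ℝ => Φ (x + t • (y - x))) 0 t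
      = (Φ (x + t • (y - x)) - Φ x) / t := by
    simp [slope_def_field]
  rw [hs, heq, div_le_iff₀ ht0]
  simp only [smul_eq_mul] at hc
  nlinarith

lemma tel_sum_aux (A B : ℕ → ℝ) (n : ℕ) :
    ∑ t ∈ Finset.range (n + 1), (A t - B t)
      = A 0 - B n + ∑ t ∈ Finset.range n, (A (t + 1) - B t) := by
  induction n with
  | zero => simp
  | succ m ih => rw [Finset.sum_range_succ, ih, Finset.sum_range_succ]; ring

/-- Telescoping Bregman-divergence bound (key step in the proof of the paper's
Theorem 7): the accumulated divergence drift of optimistic OMA against a dynamic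
comparator is controlled by `D² + 2L·(path length)`. Here `gΦ x` is the gradient of
`Φ` at `x`, expressed via the Riesz map. -/
theorem bregman_telescoping_bound
    (E : Type*) [NormedAddCommGroup E] [InnerProductSpace ℝ E]
    (Φ : E → ℝ) (gΦ : E → E)
    (hΦdiff : ∀ x, HasFDerivAt Φ ((InnerProductSpace.toDualMap ℝ E (gΦ x) :
        StrongDual ℝ E) : E →L[ℝ] ℝ) x)
    (hΦconv : ConvexOn ℝ Set.univ Φ)
    (T : ℕ) (hT : 0 < T)
    (ystar : ℕ → E) (ypi : ℕ → E)
    (D L : ℝ) (hD : 0 ≤ D) (hL : 0 ≤ L)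
    (hinit : Φ (ystar 1) - Φ (ypi 0) - ⟪gΦ (ypi 0), ystar 1 - ypi 0⟫ ≤ D ^ 2)
    (hgrad_ystar : ∀ t, 1 ≤ t → t ≤ T → ‖gΦ (ystar (t + 1))‖ ≤ L)
    (hgrad_ypi : ∀ t, 1 ≤ t → t ≤ T → ‖gΦ (ypi t)‖ ≤ L) :
    ∑ t ∈ Finset.range T,
        ((Φ (ystar (t + 1)) - Φ (ypi t) - ⟪gΦ (ypi t), ystar (t + 1) - ypi t⟫)
          - (Φ (ystar (t + 1)) - Φ (ypi (t + 1))
              - ⟪gΦ (ypi (t + 1)), ystar (t + 1) - ypi (t + 1)⟫))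
      ≤ D ^ 2 + 2 * L * ∑ t ∈ Finset.range T, ‖ystar (t + 2) - ystar (t + 1)‖ := by
  obtain ⟨n, rfl⟩ : ∃ n, T = n + 1 := ⟨T - 1, (Nat.succ_pred_eq_of_pos hT).symm⟩
  set A : ℕ → ℝ := fun t => Φ (ystar (t + 1)) - Φ (ypi t) - ⟪gΦ (ypi t), ystar (t + 1) - ypi t⟫
    with hA
  set B : ℕ → ℝ := fun t => Φ (ystar (t + 1)) - Φ (ypi (t + 1))
      - ⟪gΦ (ypi (t + 1)), ystar (t + 1) - ypi (t + 1)⟫ with hB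
  have key : ∑ t ∈ Finset.range (n + 1), (A t - B t)
      = A 0 - B n + ∑ t ∈ Finset.range n, (A (t + 1) - B t) := tel_sum_aux A B n
  have hBnonneg : 0 ≤ B n := by
    have := grad_ineq_aux Φ gΦ hΦdiff hΦconv (ypi (n + 1)) (ystar (n + 1))
    simp only [hB]
    linarith
  have hterm : ∀ t ∈ Finset.range n, A (t + 1) - B t ≤ 2 * L * ‖ystar (t + 2) - ystar (t + 1)‖ := by
    intro t htmem
    have htn : t < n := Finset.mem_range.1 htmem
    have hAB : A (t + 1) - B t
        = Φ (ystar (t + 2)) - Φ (ystar (t + 1))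
          - ⟪gΦ (ypi (t + 1)), ystar (t + 2) - ystar (t + 1)⟫ := by
      simp only [hA, hB]
      have h1 : ystar (t + 2) - ypi (t + 1) = (ystar (t + 2) - ystar (t + 1))
          + (ystar (t + 1) - ypi (t + 1)) := by abel
      rw [show t + 1 + 1 = t + 2 from rfl, h1, inner_add_right]
      ring
    have hgrad : Φ (ystar (t + 2)) - Φ (ystar (t + 1))
        ≤ ⟪gΦ (ystar (t + 2)), ystar (t + 2) - ystar (t + 1)⟫ := by
      have h0 := grad_ineq_aux Φ gΦ hΦdiff hΦconv (ystar (t + 2)) (ystar (t + 1))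
      have h2 : ⟪gΦ (ystar (t + 2)), ystar (t + 1) - ystar (t + 2)⟫
          = -⟪gΦ (ystar (t + 2)), ystar (t + 2) - ystar (t + 1)⟫ := by
        rw [← inner_neg_right]; congr 1; abel
      rw [h2] at h0
      linarith
    have hb1 : ‖gΦ (ystar (t + 2))‖ ≤ L :=
      hgrad_ystar (t + 1) (Nat.le_add_left 1 t) (by omega)
    have hb2 : ‖gΦ (ypi (t + 1))‖ ≤ L :=
      hgrad_ypi (t + 1) (Nat.le_add_left 1 t) (by omega)
    have hCS : ⟪gΦ (ystar (t + 2)) - gΦ (ypi (t + 1)), ystar (t + 2) - ystar (t + 1)⟫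
        ≤ 2 * L * ‖ystar (t + 2) - ystar (t + 1)‖ := by
      have h3 : ⟪gΦ (ystar (t + 2)) - gΦ (ypi (t + 1)), ystar (t + 2) - ystar (t + 1)⟫
          ≤ ‖gΦ (ystar (t + 2)) - gΦ (ypi (t + 1))‖ * ‖ystar (t + 2) - ystar (t + 1)‖ :=
        real_inner_le_norm _ _
      have h4 : ‖gΦ (ystar (t + 2)) - gΦ (ypi (t + 1))‖
          ≤ ‖gΦ (ystar (t + 2))‖ + ‖gΦ (ypi (t + 1))‖ := norm_sub_le _ _
      nlinarith [norm_nonneg (ystar (t + 2) - ystar (t + 1)),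
        norm_nonneg (gΦ (ystar (t + 2)) - gΦ (ypi (t + 1)))]
    have hsub : ⟪gΦ (ystar (t + 2)) - gΦ (ypi (t + 1)), ystar (t + 2) - ystar (t + 1)⟫
        = ⟪gΦ (ystar (t + 2)), ystar (t + 2) - ystar (t + 1)⟫
          - ⟪gΦ (ypi (t + 1)), ystar (t + 2) - ystar (t + 1)⟫ := inner_sub_left _ _ _
    linarith [hAB, hgrad, hCS, hsub]
  have hsum : ∑ t ∈ Finset.range n, (A (t + 1) - B t)
      ≤ ∑ t ∈ Finset.range n, 2 * L * ‖ystar (t + 2) - ystar (t + 1)‖ :=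
    Finset.sum_le_sum hterm
  have hsum2 : ∑ t ∈ Finset.range n, 2 * L * ‖ystar (t + 2) - ystar (t + 1)‖
      = 2 * L * ∑ t ∈ Finset.range n, ‖ystar (t + 2) - ystar (t + 1)‖ := by
    rw [Finset.mul_sum]
  have hext : 2 * L * ∑ t ∈ Finset.range n, ‖ystar (t + 2) - ystar (t + 1)‖
      ≤ 2 * L * ∑ t ∈ Finset.range (n + 1), ‖ystar (t + 2) - ystar (t + 1)‖ := by
    apply mul_le_mul_of_nonneg_left _ (by positivity)
    exact Finset.sum_le_sum_of_subset_of_nonneg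
      (Finset.range_subset_range.2 (Nat.le_succ n)) (fun _ _ _ => norm_nonneg _)
  have hmain : ∑ t ∈ Finset.range (n + 1), (A t - B t)
      ≤ D ^ 2 + 2 * L * ∑ t ∈ Finset.range (n + 1), ‖ystar (t + 2) - ystar (t + 1)‖ := by
    rw [key]
    have hA0 : A 0 ≤ D ^ 2 := hinit
    linarith
  exact hmain
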